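/- If x* minimizes f₁(x) + f₂(Bx + b) + f₃(x) where f₁ is convex differentiable and f₂, f₃ are proper lsc convex with f₂∘(B·+b) and f₃ having full domain intersection conditions (e.g., f₂ finite-valued), then there exists v* ∈ ∂f₂(Bx* + b) such that x* = prox_{γf₃}(x* − γ∇f₁(x*) − γBᵀv*) for every γ > 0. -/

import Mathlib

set_option maxHeartbeats 1000000


open scoped RealInnerProductSpace

/-- if `x*` minimizes `f₁(x) + f₂(Bx+b) + f₃(x)`, then there exists
`v* ∈ ∂f₂(Bx*+b)` with `x* = prox_{γf₃}(x* − γ∇f₁(x*) − γBᵀv*)` for every `γ > 0`. -/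
theorem optimality_prox_fixed_point (n m : ℕ)
    (f₁ : EuclideanSpace ℝ (Fin n) → ℝ)
    (hconv₁ : ConvexOn ℝ Set.univ f₁) (hdiff₁ : Differentiable ℝ f₁)
    (f₂ : EuclideanSpace ℝ (Fin m) → ℝ)
    (hconv₂ : ConvexOn ℝ Set.univ f₂)
    (f₃ : EuclideanSpace ℝ (Fin n) → EReal)
    (hbot : ∀ x, f₃ x ≠ ⊥) (htop : ∃ x, f₃ x ≠ ⊤)
    (hlsc : LowerSemicontinuous f₃)
    (hconv₃ : ∀ x y : EuclideanSpace ℝ (Fin n), ∀ t : ℝ, 0 ≤ t → t ≤ 1 →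
      f₃ (t • x + (1 - t) • y) ≤ (t : EReal) * f₃ x + ((1 - t : ℝ) : EReal) * f₃ y)
    (B : EuclideanSpace ℝ (Fin n) →L[ℝ] EuclideanSpace ℝ (Fin m))
    (b : EuclideanSpace ℝ (Fin m))
    (xs : EuclideanSpace ℝ (Fin n))
    (hmin : ∀ y, ((f₁ xs + f₂ (B xs + b) : ℝ) : EReal) + f₃ xs
      ≤ ((f₁ y + f₂ (B y + b) : ℝ) : EReal) + f₃ y) :
    ∃ v : EuclideanSpace ℝ (Fin m),
      (∀ u, f₂ (B xs + b) + ⟪v, u - (B xs + b)⟫ ≤ f₂ u) ∧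
      ∀ γ : ℝ, 0 < γ →
        ∀ y, (γ : EReal) * f₃ xs
            + ((1 / 2 * ‖(xs - γ • gradient f₁ xs - γ • B.adjoint v) - xs‖ ^ 2 : ℝ) : EReal)
          ≤ (γ : EReal) * f₃ y
            + ((1 / 2 * ‖(xs - γ • gradient f₁ xs - γ • B.adjoint v) - y‖ ^ 2 : ℝ) : EReal) := by
  classical
  obtain ⟨y₀, hy₀⟩ := htop
  -- f₃ xs is finite
  have hxs_top : f₃ xs ≠ ⊤ := by
    intro h
    have h1 := hmin y₀
    rw [h] at h1
    have h2 : ((f₁ xs + f₂ (B xs + b) : ℝ) : EReal) + ⊤ = ⊤ := by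
      rw [add_comm]; exact EReal.top_add_coe _
    rw [h2] at h1
    have h3 : f₃ y₀ ≤ ((f₃ y₀).toReal : EReal) := by
      rw [EReal.coe_toReal hy₀ (hbot y₀)]
    have h4 : ((f₁ y₀ + f₂ (B y₀ + b) : ℝ) : EReal) + f₃ y₀
        ≤ ((f₁ y₀ + f₂ (B y₀ + b) + (f₃ y₀).toReal : ℝ) : EReal) := by
      rw [EReal.coe_add (f₁ y₀ + f₂ (B y₀ + b))]
      exact add_le_add le_rfl h3
    have := le_trans h1 h4
    exact (EReal.coe_lt_top _).not_ge this
  set r₀ : ℝ := (f₃ xs).toReal with hr₀def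
  have hr₀ : f₃ xs = (r₀ : EReal) := (EReal.coe_toReal hxs_top (hbot xs)).symm
  have hcont₂ : Continuous f₂ := by
    exact continuousOn_univ.mp (hconv₂.continuousOn isOpen_univ)
  -- the real-valued minimality
  have hminR : ∀ x, f₃ x ≠ ⊤ →
      f₁ xs + f₂ (B xs + b) + r₀ ≤ f₁ x + f₂ (B x + b) + (f₃ x).toReal := by
    intro x hx
    have h1 := hmin x
    rw [hr₀, ← (EReal.coe_toReal hx (hbot x))] at h1
    rw [← EReal.coe_add, ← EReal.coe_add, EReal.coe_le_coe_iff] at h1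
    linarith [h1]
  set F : ℝ := f₁ xs + f₂ (B xs + b) + r₀ with hF
  -- the open convex set
  set C : Set (EuclideanSpace ℝ (Fin m) × ℝ) :=
    {p | ∃ x, f₃ x ≠ ⊤ ∧ f₁ x + f₂ (B x + b + p.1) + (f₃ x).toReal < p.2} with hC
  have hCopen : IsOpen C := by
    rw [isOpen_iff_mem_nhds]
    rintro p ⟨x, hx, hlt⟩
    have hopen : IsOpen {q : EuclideanSpace ℝ (Fin m) × ℝ |
        f₁ x + f₂ (B x + b + q.1) + (f₃ x).toReal < q.2} := by
      apply isOpen_lt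
      · exact (continuous_const.add (hcont₂.comp (continuous_const.add continuous_fst))).add
          continuous_const
      · exact continuous_snd
    exact Filter.mem_of_superset (hopen.mem_nhds hlt) (fun q hq => ⟨x, hx, hq⟩)
  have hCconv : Convex ℝ C := by
    rintro p ⟨x₁, hx₁, h₁⟩ q ⟨x₂, hx₂, h₂⟩ α β hα hβ hαβ
    obtain rfl : β = 1 - α := by linarith
    have ht₁ : f₃ x₁ = ((f₃ x₁).toReal : EReal) := (EReal.coe_toReal hx₁ (hbot x₁)).symm
    have ht₂ : f₃ x₂ = ((f₃ x₂).toReal : EReal) := (EReal.coe_toReal hx₂ (hbot x₂)).symm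
    have hcc := hconv₃ x₁ x₂ α hα (by linarith)
    rw [ht₁, ht₂, ← EReal.coe_mul, ← EReal.coe_mul, ← EReal.coe_add] at hcc
    have hne : f₃ (α • x₁ + (1 - α) • x₂) ≠ ⊤ := by
      intro h; rw [h] at hcc; exact (EReal.coe_lt_top _).not_ge hcc
    have h3 : (f₃ (α • x₁ + (1 - α) • x₂)).toReal
        ≤ α * (f₃ x₁).toReal + (1 - α) * (f₃ x₂).toReal := by
      have := EReal.toReal_le_toReal hcc (hbot _) (EReal.coe_ne_top _)
      rwa [EReal.toReal_coe] at this
    refine ⟨α • x₁ + (1 - α) • x₂, hne, ?_⟩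
    have hp1 : (α • p + (1 - α) • q).1 = α • p.1 + (1 - α) • q.1 := rfl
    have hp2 : (α • p + (1 - α) • q).2 = α * p.2 + (1 - α) * q.2 := rfl
    have harg : B (α • x₁ + (1 - α) • x₂) + b + (α • p.1 + (1 - α) • q.1)
        = α • (B x₁ + b + p.1) + (1 - α) • (B x₂ + b + q.1) := by
      rw [map_add, map_smul, map_smul]; module
    have hf1 := hconv₁.2 (Set.mem_univ x₁) (Set.mem_univ x₂) hα (by linarith : (0:ℝ) ≤ 1 - α)
      (by ring)
    have hf2 := hconv₂.2 (Set.mem_univ (B x₁ + b + p.1)) (Set.mem_univ (B x₂ + b + q.1)) hα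
      (by linarith : (0:ℝ) ≤ 1 - α) (by ring)
    simp only [smul_eq_mul] at hf1 hf2
    show f₁ _ + f₂ _ + _ < (α • p + (1 - α) • q).2
    rw [hp1, hp2, harg]
    have key : f₁ (α • x₁ + (1 - α) • x₂)
        + f₂ (α • (B x₁ + b + p.1) + (1 - α) • (B x₂ + b + q.1))
        + (f₃ (α • x₁ + (1 - α) • x₂)).toReal
        ≤ α * (f₁ x₁ + f₂ (B x₁ + b + p.1) + (f₃ x₁).toReal)
          + (1 - α) * (f₁ x₂ + f₂ (B x₂ + b + q.1) + (f₃ x₂).toReal) := by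
      nlinarith [hf1, hf2, h3]
    rcases hα.eq_or_lt with h0 | h0
    · have : α = 0 := h0.symm
      subst this
      nlinarith [h₂]
    · nlinarith [mul_lt_mul_of_pos_left h₁ h0,
        mul_le_mul_of_nonneg_left h₂.le (by linarith : (0:ℝ) ≤ 1 - α)]
  have hC0 : ((0 : EuclideanSpace ℝ (Fin m)), F) ∉ C := by
    rintro ⟨x, hx, hlt⟩
    simp only [add_zero] at hlt
    exact absurd hlt (not_lt.mpr (hminR x hx))
  obtain ⟨ℓ, hℓ⟩ := geometric_hahn_banach_open_point hCconv hCopen hC0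
  set β : ℝ := ℓ (0, 1) with hβdef
  have hdecomp : ∀ (u : EuclideanSpace ℝ (Fin m)) (r : ℝ), ℓ (u, r) = ℓ (u, 0) + r * β := by
    intro u r
    have h : (u, r) = (u, (0:ℝ)) + r • ((0 : EuclideanSpace ℝ (Fin m)), (1:ℝ)) := by
      simp [Prod.ext_iff]
    rw [h, map_add, map_smul, smul_eq_mul]
  have hzero : ℓ ((0 : EuclideanSpace ℝ (Fin m)), (0:ℝ)) = 0 := map_zero ℓ
  have hmemC : ∀ x, f₃ x ≠ ⊤ → ∀ (u : EuclideanSpace ℝ (Fin m)) (r : ℝ),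
      f₁ x + f₂ (B x + b + u) + (f₃ x).toReal < r → (u, r) ∈ C :=
    fun x hx u r h => ⟨x, hx, h⟩
  have hβneg : β < 0 := by
    have hmem := hmemC xs hxs_top 0 (F + 1) (by simp only [add_zero]; rw [hF]; simp [hr₀def])
    have h1 := hℓ _ hmem
    rw [hdecomp 0 (F + 1), hdecomp 0 F] at h1
    linarith
  have hβne : β ≠ 0 := ne_of_lt hβneg
  set v : EuclideanSpace ℝ (Fin m) :=
    (-β⁻¹) • (InnerProductSpace.toDual ℝ (EuclideanSpace ℝ (Fin m))).symm
      (ℓ.comp (ContinuousLinearMap.inl ℝ (EuclideanSpace ℝ (Fin m)) ℝ)) with hv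
  have hinner : ∀ u : EuclideanSpace ℝ (Fin m), ⟪v, u⟫ = -β⁻¹ * ℓ (u, 0) := by
    intro u
    rw [hv, real_inner_smul_left]
    congr 1
    exact InnerProductSpace.toDual_symm_apply
  have hkey : ∀ x, f₃ x ≠ ⊤ → ∀ u : EuclideanSpace ℝ (Fin m),
      F ≤ f₁ x + f₂ (B x + b + u) + (f₃ x).toReal - ⟪v, u⟫ := by
    intro x hx u
    set G : ℝ := f₁ x + f₂ (B x + b + u) + (f₃ x).toReal with hG
    have hle : ℓ (u, 0) + G * β ≤ F * β := by
      by_contra hcon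
      push_neg at hcon
      set ε : ℝ := (ℓ (u, 0) + G * β - F * β) / (-β) with hε
      have hεpos : 0 < ε := div_pos (by linarith) (by linarith)
      have h1 := hℓ _ (hmemC x hx u (G + ε) (by linarith))
      rw [hdecomp u (G + ε), hdecomp 0 F, hzero] at h1
      have hεβ : ε * β = -(ℓ (u, 0) + G * β - F * β) := by
        rw [hε, div_neg, neg_mul, div_mul_cancel₀ _ hβne]
      nlinarith [h1, hεβ]
    have hc : (0:ℝ) < -β := by linarith
    have hexp : (G - ⟪v, u⟫) * (-β) = -(G * β) - ℓ (u, 0) := by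
      rw [hinner]; field_simp; ring
    have hgoal : F * (-β) ≤ (G - ⟪v, u⟫) * (-β) := by rw [hexp]; nlinarith [hle]
    exact le_of_sub_nonneg (by nlinarith [le_of_mul_le_mul_right hgoal hc])
  -- part 1: subgradient inequality for f₂
  have hpart1 : ∀ u, f₂ (B xs + b) + ⟪v, u - (B xs + b)⟫ ≤ f₂ u := by
    intro u
    have h := hkey xs hxs_top (u - (B xs + b))
    have harg : B xs + b + (u - (B xs + b)) = u := by abel
    rw [harg, hF, ← hr₀def] at h
    linarith
  -- consequence for f₃
  have hkey2 : ∀ x, f₃ x ≠ ⊤ →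
      f₁ xs + r₀ ≤ f₁ x + (f₃ x).toReal + ⟪B.adjoint v, x - xs⟫ := by
    intro x hx
    have h := hkey x hx (B xs - B x)
    have harg : B x + b + (B xs - B x) = B xs + b := by abel
    rw [harg, hF] at h
    have hadj : ⟪B.adjoint v, x - xs⟫ = ⟪v, B (x - xs)⟫ :=
      ContinuousLinearMap.adjoint_inner_left B (x - xs) v
    have hBsub : B (x - xs) = B x - B xs := map_sub B x xs
    have hneg : ⟪v, B xs - B x⟫ = -⟪v, B x - B xs⟫ := by
      rw [← neg_sub (B x) (B xs), inner_neg_right]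
    rw [hadj, hBsub]
    linarith
  -- subgradient inequality for f₃ via directional derivative
  have hsub : ∀ y, f₃ y ≠ ⊤ →
      r₀ ≤ (f₃ y).toReal + ⟪gradient f₁ xs + B.adjoint v, y - xs⟫ := by
    intro y hy
    set d : EuclideanSpace ℝ (Fin n) := y - xs with hd
    set A : EuclideanSpace ℝ (Fin n) := B.adjoint v with hA
    set ty : ℝ := (f₃ y).toReal with hty
    have hslope : ∀ t : ℝ, t ∈ Set.Ioc (0:ℝ) 1 →
        r₀ - ty - ⟪A, d⟫ ≤ (f₁ (xs + t • d) - f₁ xs) / t := by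
      rintro t ⟨ht0, ht1⟩
      have hcc := hconv₃ y xs t ht0.le ht1
      have hcomb : t • y + (1 - t) • xs = xs + t • d := by rw [hd]; module
      rw [hcomb, hr₀, ← (EReal.coe_toReal hy (hbot y)), ← hty] at hcc
      rw [← EReal.coe_mul, ← EReal.coe_mul, ← EReal.coe_add] at hcc
      have hne : f₃ (xs + t • d) ≠ ⊤ := by
        intro h; rw [h] at hcc; exact (EReal.coe_lt_top _).not_ge hcc
      have htr : (f₃ (xs + t • d)).toReal ≤ t * ty + (1 - t) * r₀ := by
        have := EReal.toReal_le_toReal hcc (hbot _) (EReal.coe_ne_top _)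
        rwa [EReal.toReal_coe] at this
      have h2 := hkey2 (xs + t • d) hne
      have hxt : xs + t • d - xs = t • d := by abel
      rw [hxt, real_inner_smul_right] at h2
      rw [le_div_iff₀ ht0]
      nlinarith [h2, htr]
    have hder : HasDerivAt (fun t : ℝ => f₁ (xs + t • d)) (fderiv ℝ f₁ xs d) 0 := by
      have h1 : HasDerivAt (fun t : ℝ => xs + t • d) d 0 := by
        simpa using ((hasDerivAt_id (0:ℝ)).smul_const d).const_add xs
      have h2 : HasFDerivAt f₁ (fderiv ℝ f₁ xs) (xs + (0:ℝ) • d) := by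
        simpa using (hdiff₁ xs).hasFDerivAt
      exact h2.comp_hasDerivAt (0:ℝ) h1
    rw [hasDerivAt_iff_tendsto_slope] at hder
    have hder' : Filter.Tendsto (slope (fun t : ℝ => f₁ (xs + t • d)) 0)
        (nhdsWithin 0 (Set.Ioi 0)) (nhds (fderiv ℝ f₁ xs d)) :=
      hder.mono_left (nhdsWithin_mono 0 (fun t ht => ne_of_gt ht))
    have hlim : r₀ - ty - ⟪A, d⟫ ≤ fderiv ℝ f₁ xs d := by
      refine ge_of_tendsto hder' ?_
      filter_upwards [Ioc_mem_nhdsGT_of_mem (Set.mem_Ico.mpr ⟨le_refl (0:ℝ), one_pos⟩)]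
        with t ht
      have hs : slope (fun t : ℝ => f₁ (xs + t • d)) 0 t
          = (f₁ (xs + t • d) - f₁ xs) / t := by
        rw [slope_def_field]; simp
      rw [hs]
      exact hslope t ht
    have hgrad : ⟪gradient f₁ xs, d⟫ = fderiv ℝ f₁ xs d := by
      simp only [gradient]
      exact InnerProductSpace.toDual_symm_apply
    rw [inner_add_left]
    linarith
  refine ⟨v, hpart1, ?_⟩
  intro γ hγ y
  set g : EuclideanSpace ℝ (Fin n) := gradient f₁ xs with hg
  set A : EuclideanSpace ℝ (Fin n) := B.adjoint v with hA
  set w : EuclideanSpace ℝ (Fin n) := g + A with hw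
  have hnorm1 : ‖xs - γ • g - γ • A - xs‖ ^ 2 = γ ^ 2 * ‖w‖ ^ 2 := by
    have hzxs : xs - γ • g - γ • A - xs = -(γ • w) := by rw [hw]; module
    rw [hzxs, norm_neg, norm_smul, mul_pow, Real.norm_eq_abs, sq_abs]
  by_cases hy : f₃ y = ⊤
  · rw [hy, EReal.coe_mul_top_of_pos hγ, EReal.top_add_coe, hr₀,
      ← EReal.coe_mul, ← EReal.coe_add]
    exact le_top
  · have hty : f₃ y = (((f₃ y).toReal : ℝ) : EReal) := (EReal.coe_toReal hy (hbot y)).symm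
    set ty : ℝ := (f₃ y).toReal with htydef
    have hs := hsub y hy
    rw [hr₀, hty, ← EReal.coe_mul, ← EReal.coe_mul, ← EReal.coe_add, ← EReal.coe_add,
      EReal.coe_le_coe_iff]
    have hzy : xs - γ • g - γ • A - y = (xs - y) - γ • w := by rw [hw]; module
    rw [hnorm1, hzy]
    have hexp2 : ‖(xs - y) - γ • w‖ ^ 2
        = ‖xs - y‖ ^ 2 - 2 * (γ * ⟪xs - y, w⟫) + γ ^ 2 * ‖w‖ ^ 2 := by
      rw [norm_sub_sq_real, real_inner_smul_right, norm_smul, mul_pow, Real.norm_eq_abs,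
        sq_abs]
    rw [hexp2]
    have hinner2 : ⟪w, y - xs⟫ = -⟪xs - y, w⟫ := by
      rw [← neg_sub xs y, inner_neg_right, real_inner_comm]
    nlinarith [mul_le_mul_of_nonneg_left hs hγ.le, sq_nonneg ‖xs - y‖, hinner2]
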